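/- arXiv:2408.04159 — 3 statements merged into one kernel-verified Lean document; each statement's English description precedes it below -/
import Mathlib

section
/- The number field Q(ζ₁₆, √(−1+√2)), obtained by adjoining to Q a primitive 16th root of unity ζ₁₆ and a square root of −1+√2, has degree 16 over Q. -/
set_option maxHeartbeats 1000000
set_option synthInstance.maxHeartbeats 400000

open Polynomial IntermediateField

/-- The number field `ℚ(ζ₁₆, √(−1+√2))` has degree 16 over `ℚ`. -/
theorem stmt_0 (ζ s : ℂ) (hζ : IsPrimitiveRoot ζ 16)
    (hs : s ^ 2 = -1 + (Real.sqrt 2 : ℂ)) :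
    Module.finrank ℚ ↥(IntermediateField.adjoin ℚ ({ζ, s} : Set ℂ)) = 16 := by
  have h16 : ζ ^ 16 = 1 := hζ.pow_eq_one
  have h8 : ζ ^ 8 = -1 :=
    (hζ.pow (by norm_num) (by norm_num : 16 = 8 * 2)).eq_neg_one_of_two_right
  have hζi : IsIntegral ℚ ζ :=
    ⟨X ^ 16 - 1, monic_X_pow_sub_C 1 (by norm_num), by simp [h16]⟩
  have hconjζ : (starRingEnd ℂ) ζ = ζ ^ 15 := by
    have habs : ‖ζ‖ = 1 := Complex.norm_eq_one_of_pow_eq_one h16 (by norm_num)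
    have h1 : ζ * ζ ^ 15 = 1 := by rw [← pow_succ']; exact h16
    rw [← Complex.inv_eq_conj habs]
    exact (eq_inv_of_mul_eq_one_right h1).symm
  have hroot : ∀ k : ℕ, Nat.Coprime k 16 → aeval (ζ ^ k) (minpoly ℚ ζ) = 0 := by
    intro k hk
    rw [← cyclotomic_eq_minpoly_rat hζ (by norm_num), aeval_def, eval₂_eq_eval_map,
      map_cyclotomic]
    exact (hζ.pow_of_coprime k hk).isRoot_cyclotomic (by norm_num)
  -- sqrt 2 in ℚ⟮ζ⟯
  have hsq2 : ((Real.sqrt 2 : ℝ) : ℂ) ^ 2 = 2 := by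
    rw [← Complex.ofReal_pow]
    norm_cast
    exact Real.sq_sqrt (by norm_num)
  have hw : (ζ ^ 2 + ζ ^ 14) ^ 2 = 2 := by
    linear_combination (2 - ζ ^ 4) * h16 + ζ ^ 20 * h8
  have hsplit : ((Real.sqrt 2 : ℂ) - (ζ ^ 2 + ζ ^ 14)) * ((Real.sqrt 2 : ℂ) + (ζ ^ 2 + ζ ^ 14)) = 0 := by
    linear_combination hsq2 - hw
  -- power basis of K = ℚ⟮ζ⟯
  set K := ℚ⟮ζ⟯ with hK
  set pb : PowerBasis ℚ K := adjoin.powerBasis hζi with hpb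
  have hgen : pb.gen = AdjoinSimple.gen ℚ ζ := rfl
  have hgenval : (pb.gen : ℂ) = ζ := rfl
  have hgenmin : minpoly ℚ pb.gen = minpoly ℚ ζ := by rw [hgen]; exact minpoly_gen (F := ℚ) ζ
  -- the embeddings
  have hr5 : aeval (ζ ^ 5) (minpoly ℚ pb.gen) = 0 := by rw [hgenmin]; exact hroot 5 (by norm_num)
  have hr11 : aeval (ζ ^ 11) (minpoly ℚ pb.gen) = 0 := by rw [hgenmin]; exact hroot 11 (by norm_num)
  have hr15 : aeval (pb.gen ^ 15) (minpoly ℚ pb.gen) = 0 := by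
    apply Subtype.val_injective
    show K.val _ = K.val 0
    rw [← Polynomial.aeval_algHom_apply K.val (pb.gen ^ 15) (minpoly ℚ pb.gen)]
    have h1 : (K.val) (pb.gen ^ 15) = ζ ^ 15 := by
      rw [map_pow]; rfl
    rw [h1, hgenmin, map_zero]
    simpa using hroot 15 (by norm_num)
  set σ5 : K →ₐ[ℚ] ℂ := pb.lift (ζ ^ 5) hr5 with hσ5
  set σ11 : K →ₐ[ℚ] ℂ := pb.lift (ζ ^ 11) hr11 with hσ11
  set aut : K →ₐ[ℚ] K := pb.lift (pb.gen ^ 15) hr15 with haut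
  have hσ5gen : σ5 pb.gen = ζ ^ 5 := pb.lift_gen _ hr5
  have hσ11gen : σ11 pb.gen = ζ ^ 11 := pb.lift_gen _ hr11
  have hautgen : aut pb.gen = pb.gen ^ 15 := pb.lift_gen _ hr15
  have conjC : ℂ →ₐ[ℚ] ℂ := (starRingEnd ℂ).toRatAlgHom
  -- helper for powers
  have hpow : ∀ a b : ℕ, ζ ^ (16 * a + b) = ζ ^ b := fun a b => by
    rw [pow_add, pow_mul, h16, one_pow, one_mul]
  -- E1 : conj ∘ σ5 = σ11
  have E1 : ((starRingEnd ℂ).toRatAlgHom.comp σ5) = σ11 := by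
    apply pb.algHom_ext
    rw [AlgHom.comp_apply, hσ5gen, hσ11gen]
    show (starRingEnd ℂ) (ζ ^ 5) = ζ ^ 11
    rw [map_pow, hconjζ, ← pow_mul]
    exact hpow 4 11
  -- E2 : σ5 ∘ aut = σ11
  have E2 : (σ5.comp aut) = σ11 := by
    apply pb.algHom_ext
    rw [AlgHom.comp_apply, hautgen, hσ11gen, map_pow, hσ5gen, ← pow_mul]
    exact hpow 4 11
  -- E3 : conj ∘ val = val ∘ aut
  have E3 : ((starRingEnd ℂ).toRatAlgHom.comp K.val) = K.val.comp aut := by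
    apply pb.algHom_ext
    show (starRingEnd ℂ).toRatAlgHom (K.val pb.gen) = K.val (aut pb.gen)
    rw [hautgen, map_pow]
    show (starRingEnd ℂ) (pb.gen : ℂ) = (pb.gen : ℂ) ^ 15
    rw [hgenval, hconjζ]
  -- sqrt2 element of K
  have hwmem : (ζ ^ 2 + ζ ^ 14 : ℂ) ∈ K := by
    have hζK : ζ ∈ K := mem_adjoin_simple_self ℚ ζ
    exact add_mem (pow_mem hζK 2) (pow_mem hζK 14)
  have hσ5w : σ5 ⟨ζ ^ 2 + ζ ^ 14, hwmem⟩ = -(ζ ^ 2 + ζ ^ 14) := by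
    have hx : (⟨ζ ^ 2 + ζ ^ 14, hwmem⟩ : K) = pb.gen ^ 2 + pb.gen ^ 14 := by
      apply Subtype.val_injective
      simp [hgenval]
    rw [hx, map_add, map_pow, map_pow, hσ5gen, ← pow_mul, ← pow_mul]
    have h70 : ζ ^ 70 = ζ ^ 6 := hpow 4 6
    rw [show 5 * 2 = 10 from rfl, show 5 * 14 = 70 from rfl, h70]
    linear_combination (ζ ^ 2 + ζ ^ 6) * h8
  obtain ⟨u, huval, huσ⟩ : ∃ u : K, ((u : ℂ) = (Real.sqrt 2 : ℂ)) ∧ σ5 u = -(Real.sqrt 2 : ℂ) := by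
    rcases mul_eq_zero.mp hsplit with h | h
    · have h' : (Real.sqrt 2 : ℂ) = ζ ^ 2 + ζ ^ 14 := by linear_combination h
      exact ⟨⟨ζ ^ 2 + ζ ^ 14, hwmem⟩, h'.symm, by rw [hσ5w, h']⟩
    · have h' : (Real.sqrt 2 : ℂ) = -(ζ ^ 2 + ζ ^ 14) := by linear_combination h
      refine ⟨-⟨ζ ^ 2 + ζ ^ 14, hwmem⟩, ?_, ?_⟩
      · rw [h']; rfl
      · rw [map_neg, hσ5w, h', neg_neg]
  -- s is not in K
  have h12 : (1 : ℝ) < Real.sqrt 2 := by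
    rw [show (1 : ℝ) = Real.sqrt 1 by simp]
    exact Real.sqrt_lt_sqrt (by norm_num) (by norm_num)
  have hsnotK : s ∉ K := by
    intro hsK
    set sK : K := ⟨s, hsK⟩ with hsKdef
    -- s is real, so fixed by conjugation
    have hs2conj : ((starRingEnd ℂ) s) ^ 2 = s ^ 2 := by
      rw [← map_pow, hs]
      rw [map_add, map_neg, map_one, Complex.conj_ofReal]
    have hconjs : (starRingEnd ℂ) s = s := by
      have hfac : ((starRingEnd ℂ) s - s) * ((starRingEnd ℂ) s + s) = 0 := by
        linear_combination hs2conj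
      rcases mul_eq_zero.mp hfac with h | h
      · exact sub_eq_zero.mp h
      · exfalso
        have hre : s.re = 0 := by
          have := congrArg Complex.re (eq_neg_of_add_eq_zero_left h)
          simp [Complex.conj_re] at this
          linarith
        have : (s ^ 2).re = -(s.im ^ 2) := by
          rw [sq, Complex.mul_re, hre]; ring
        rw [hs] at this
        have h2 : (-1 + (Real.sqrt 2 : ℂ)).re = -1 + Real.sqrt 2 := by simp
        rw [h2] at this
        nlinarith [sq_nonneg s.im]
    -- aut fixes sK
    have hauts : aut sK = sK := by
      apply Subtype.val_injective
      have := congrArg (fun f : K →ₐ[ℚ] ℂ => f sK) E3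
      change (starRingEnd ℂ).toRatAlgHom (K.val sK) = K.val (aut sK) at this
      have h1 : (starRingEnd ℂ).toRatAlgHom (K.val sK) = (starRingEnd ℂ) s := rfl
      rw [h1, hconjs] at this
      exact this.symm
    -- t := σ5 sK is real
    set t : ℂ := σ5 sK with ht
    have htconj : (starRingEnd ℂ) t = t := by
      have := congrArg (fun f : K →ₐ[ℚ] ℂ => f sK) E1
      simp only [AlgHom.comp_apply] at this
      have h1 : (starRingEnd ℂ).toRatAlgHom (σ5 sK) = (starRingEnd ℂ) t := rfl
      rw [h1] at this
      have h2 := congrArg (fun f : K →ₐ[ℚ] ℂ => f sK) E2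
      simp only [AlgHom.comp_apply] at h2
      rw [hauts] at h2
      rw [this, ← h2]
    -- but t^2 = -1 - sqrt 2 < 0
    have ht2 : t ^ 2 = -1 - (Real.sqrt 2 : ℂ) := by
      have hsq : sK ^ 2 = -1 + u := by
        apply Subtype.val_injective
        push_cast
        rw [huval]
        exact hs
      rw [ht, ← map_pow, hsq, map_add, map_neg, map_one, huσ]
      ring
    have htim : t.im = 0 := Complex.conj_eq_iff_im.mp htconj
    have htre : (t ^ 2).re = t.re ^ 2 := by
      rw [sq, Complex.mul_re, htim]; ring
    rw [ht2] at htre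
    have : (-1 - (Real.sqrt 2 : ℂ)).re = -1 - Real.sqrt 2 := by simp
    rw [this] at htre
    nlinarith [sq_nonneg t.re, Real.sqrt_nonneg 2]
  -- degree of K over ℚ is 8
  have hdegK : Module.finrank ℚ K = 8 := by
    rw [adjoin.finrank hζi, ← cyclotomic_eq_minpoly_rat hζ (by norm_num),
      natDegree_cyclotomic]
    decide
  -- degree of K⟮s⟯ over K is 2
  have hc : (-1 + u : K) = (-1 + u : K) := rfl
  have hsint : IsIntegral K s := by
    refine ⟨X ^ 2 - C (-1 + u), monic_X_pow_sub_C _ (by norm_num), ?_⟩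
    have halg : (algebraMap K ℂ) (-1 + u) = -1 + (Real.sqrt 2 : ℂ) := by
      rw [map_add, map_neg, map_one]
      congr 1
    simp only [eval₂_sub, eval₂_pow, eval₂_X, eval₂_C, halg, hs, sub_self]
  have hdeg2 : Module.finrank K K⟮s⟯ = 2 := by
    rw [adjoin.finrank hsint]
    have hdvd : minpoly K s ∣ X ^ 2 - C (-1 + u) := by
      apply minpoly.dvd
      have halg : (algebraMap K ℂ) (-1 + u) = -1 + (Real.sqrt 2 : ℂ) := by
        rw [map_add, map_neg, map_one]
        congr 1
      simp only [map_sub, map_pow, aeval_X, aeval_C, halg, hs, sub_self]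
    have hle : (minpoly K s).natDegree ≤ 2 := by
      have h2 := Polynomial.natDegree_le_of_dvd hdvd
        (monic_X_pow_sub_C (-1 + u) (by norm_num : (2:ℕ) ≠ 0)).ne_zero
      rwa [natDegree_X_pow_sub_C] at h2
    have hge : 2 ≤ (minpoly K s).natDegree := by
      rw [minpoly.two_le_natDegree_iff hsint]
      rintro ⟨x, hx⟩
      apply hsnotK
      have : (x : ℂ) = s := hx
      rw [← this]
      exact x.2
    omega
  -- combine via the tower ℚ ⊆ K ⊆ K⟮s⟯
  have key : (IntermediateField.adjoin K {s}).restrictScalars ℚ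
      = IntermediateField.adjoin ℚ ({ζ, s} : Set ℂ) := by
    have := adjoin_adjoin_left ℚ {ζ} {s}
    rw [Set.singleton_union] at this
    exact this
  rw [← key]
  have hres : Module.finrank ℚ ↥((IntermediateField.adjoin K {s}).restrictScalars ℚ)
      = Module.finrank ℚ ↥(IntermediateField.adjoin K {s}) := rfl
  haveI : FiniteDimensional K ↥(IntermediateField.adjoin K {s}) := adjoin.finiteDimensional hsint
  rw [hres, ← Module.finrank_mul_finrank ℚ K ↥(IntermediateField.adjoin K {s})]
  rw [hdegK]
  have h2' : Module.finrank K ↥(IntermediateField.adjoin K {s}) = 2 := hdeg2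
  rw [h2']
end

section
/- The field Q(ζ₁₆, √(−1+√2)) contains a fourth root of 2 and a fourth root of −2. -/
/-- `ℚ(ζ₁₆, √(−1+√2))` contains a fourth root of `2` and a fourth root of `−2`. -/
theorem stmt_1 (ζ s : ℂ) (hζ : IsPrimitiveRoot ζ 16)
    (hs : s ^ 2 = -1 + (Real.sqrt 2 : ℂ)) :
    (∃ x ∈ IntermediateField.adjoin ℚ ({ζ, s} : Set ℂ), x ^ 4 = (2 : ℂ)) ∧
    (∃ y ∈ IntermediateField.adjoin ℚ ({ζ, s} : Set ℂ), y ^ 4 = (-2 : ℂ)) := by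
  set r : ℂ := (Real.sqrt 2 : ℂ) with hrdef
  have hr : r ^ 2 = 2 := by
    rw [hrdef]; norm_cast
    rw [Real.sq_sqrt]; norm_num
  have h16 : ζ ^ 16 = 1 := hζ.pow_eq_one
  have h8 : ζ ^ 8 = -1 := by
    have hne : ζ ^ 8 ≠ 1 := hζ.pow_ne_one_of_pos_of_lt (by norm_num) (by norm_num)
    have h : (ζ ^ 8 - 1) * (ζ ^ 8 + 1) = 0 := by linear_combination h16
    rcases mul_eq_zero.mp h with h | h
    · exact absurd (by linear_combination h) hne
    · linear_combination h
  set K := IntermediateField.adjoin ℚ ({ζ, s} : Set ℂ) with hK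
  have hζK : ζ ∈ K := IntermediateField.subset_adjoin _ _ (by simp)
  have hsK : s ∈ K := IntermediateField.subset_adjoin _ _ (by simp)
  -- a = ζ^2 + ζ^14 squares to 2
  have ha2 : (ζ ^ 2 + ζ ^ 14) ^ 2 = 2 := by
    linear_combination (2 + ζ ^ 12) * h16 + ζ ^ 4 * h8
  -- find c in K with c^2 = 2 + r
  have hc : ∃ c ∈ K, c ^ 2 = 2 + r := by
    have h0 : (ζ ^ 2 + ζ ^ 14 - r) * (ζ ^ 2 + ζ ^ 14 + r) = 0 := by
      linear_combination ha2 - hr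
    rcases mul_eq_zero.mp h0 with h | h
    · exact ⟨ζ + ζ ^ 15, add_mem hζK (pow_mem hζK _),
        by linear_combination (2 + ζ ^ 14) * h16 + h⟩
    · exact ⟨ζ ^ 3 + ζ ^ 13, add_mem (pow_mem hζK _) (pow_mem hζK _),
        by linear_combination (2 + ζ ^ 10) * h16 - h + (ζ ^ 2 + ζ ^ 6) * h8⟩
  obtain ⟨c, hcK, hc2⟩ := hc
  have hx4 : (s * c) ^ 4 = 2 := by
    have hs4 : s ^ 4 = 3 - 2 * r := by linear_combination (s ^ 2 - 1 + r) * hs + hr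
    have hc4 : c ^ 4 = 6 + 4 * r := by linear_combination (c ^ 2 + 2 + r) * hc2 + hr
    linear_combination c ^ 4 * hs4 + (3 - 2 * r) * hc4 - 8 * hr
  refine ⟨⟨s * c, mul_mem hsK hcK, hx4⟩,
    ⟨ζ ^ 2 * (s * c), mul_mem (pow_mem hζK 2) (mul_mem hsK hcK), ?_⟩⟩
  calc (ζ ^ 2 * (s * c)) ^ 4 = ζ ^ 8 * (s * c) ^ 4 := by ring
  _ = -2 := by rw [h8, hx4]; ring
end

section
/- Let d be a rational number with 16d sixth-power-free and let F = Q(√d, √−3, ∛d). Then [F : Q] = 2 if d ∈ {1, −27}; [F : Q] = 4 if d = t³ for some rational t with t ∉ {1, −3} (and d not in the previous case); [F : Q] = 6 if d = t² or d = −3t² for some rational t and d is not a cube times a unit case as above; and [F : Q] = 12 otherwise. -/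
open Polynomial IntermediateField Module

set_option maxHeartbeats 1000000
set_option synthInstance.maxHeartbeats 400000

section Helpers

lemma deg_pow {K : Type*} [Field K] [Algebra K ℂ] {n : ℕ} (hn : n.Prime) {x : ℂ} {a : K}
    (hx : x ^ n = algebraMap K ℂ a) (h : ∀ b : K, b ^ n ≠ a) :
    Module.finrank K (IntermediateField.adjoin K {x}) = n := by
  have hirr : Irreducible (X ^ n - C a) := X_pow_sub_C_irreducible_of_prime hn h
  have hmonic : (X ^ n - C a).Monic := monic_X_pow_sub_C a hn.ne_zero
  have hroot : Polynomial.aeval x (X ^ n - C a) = 0 := by simp [hx]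
  have hint : IsIntegral K x := ⟨_, hmonic, by simpa [Polynomial.aeval_def] using hroot⟩
  have hmin : minpoly K x = X ^ n - C a :=
    (minpoly.eq_of_irreducible_of_monic hirr hroot hmonic).symm
  rw [IntermediateField.adjoin.finrank hint, hmin, natDegree_X_pow_sub_C]

lemma finrank_restrict {F : Type*} [Field F] [Algebra F ℂ]
    (K : IntermediateField F ℂ) (E : IntermediateField ↥K ℂ) :
    Module.finrank F ↥(E.restrictScalars F) =
      Module.finrank F ↥K * Module.finrank ↥K ↥E :=
  (Module.finrank_mul_finrank F ↥K ↥E).symm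

lemma lin_indep {r : ℂ} (hr : r ^ 2 = -3) {x y : ℚ} (h : (x : ℂ) + y * r = 0) :
    x = 0 ∧ y = 0 := by
  by_cases hy : y = 0
  · subst hy; simp at h; exact ⟨by exact_mod_cast h, rfl⟩
  · exfalso
    have h2 : ((x ^ 2 + 3 * y ^ 2 : ℚ) : ℂ) = 0 := by
      push_cast
      linear_combination ((x:ℂ) - (y:ℂ) * r) * h + (y:ℂ)^2 * hr
    have h3 : (x ^ 2 + 3 * y ^ 2 : ℚ) = 0 := by exact_mod_cast h2
    have hy2 : 0 < y ^ 2 := by positivity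
    nlinarith [sq_nonneg x]

lemma mem_rep {r : ℂ} (hr : r ^ 2 = -3) {z : ℂ}
    (hz : z ∈ IntermediateField.adjoin ℚ ({r} : Set ℂ)) :
    ∃ a b : ℚ, z = (a : ℂ) + b * r := by
  have hq0 : Polynomial.aeval r (X ^ 2 + C (3 : ℚ)) = 0 := by
    simp [hr]
  have hqm : (X ^ 2 + C (3 : ℚ)).Monic := monic_X_pow_add_C _ (by norm_num)
  have hint : IsIntegral ℚ r := ⟨_, hqm, by simpa [Polynomial.aeval_def] using hq0⟩
  have hz' : z ∈ ℚ⟮r⟯.toSubalgebra := hz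
  rw [IntermediateField.adjoin_simple_toSubalgebra_of_isAlgebraic hint.isAlgebraic,
    Algebra.adjoin_singleton_eq_range_aeval] at hz'
  obtain ⟨p, hp⟩ := hz'
  set q : ℚ[X] := X ^ 2 + C 3 with hq
  have key : Polynomial.aeval r (p %ₘ q) = z := by
    conv_rhs => rw [← hp, ← Polynomial.modByMonic_add_div p q]
    simp [hq0]
  have hdeg : (p %ₘ q).degree ≤ 1 := by
    have h2 : (p %ₘ q).degree < q.degree := Polynomial.degree_modByMonic_lt p hqm
    have hqd : q.degree = 2 := by
      rw [hq]
      compute_degree!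
    rw [hqd] at h2
    exact Order.le_of_lt_succ (by exact_mod_cast h2)
  rw [eq_X_add_C_of_degree_le_one hdeg] at key
  refine ⟨(p %ₘ q).coeff 0, (p %ₘ q).coeff 1, ?_⟩
  simp only [map_add, map_mul, aeval_C, aeval_X] at key
  rw [← key]
  simp only [eq_ratCast]
  ring

lemma sq_class {d : ℚ} {r z : ℂ} (hr : r ^ 2 = -3)
    (hz : z ∈ IntermediateField.adjoin ℚ ({r} : Set ℂ)) (h2 : z ^ 2 = (d : ℂ)) :
    ∃ t : ℚ, d = t ^ 2 ∨ d = -3 * t ^ 2 := by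
  obtain ⟨a, b, rfl⟩ := mem_rep hr hz
  have key : ((a ^ 2 - 3 * b ^ 2 - d : ℚ) : ℂ) + (2 * a * b : ℚ) * r = 0 := by
    push_cast
    linear_combination h2 - (b : ℂ) ^ 2 * hr
  obtain ⟨h1', h2'⟩ := lin_indep hr key
  have hab : a * b = 0 := by linarith
  rcases mul_eq_zero.mp hab with ha | hb
  · exact ⟨b, Or.inr (by nlinarith)⟩
  · exact ⟨a, Or.inl (by nlinarith)⟩

lemma cube_class {d : ℚ} {r z : ℂ} (hr : r ^ 2 = -3)
    (hz : z ∈ IntermediateField.adjoin ℚ ({r} : Set ℂ)) (h3 : z ^ 3 = (d : ℂ)) :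
    ∃ t : ℚ, d = t ^ 3 := by
  obtain ⟨a, b, rfl⟩ := mem_rep hr hz
  have key : ((a ^ 3 - 9 * a * b ^ 2 - d : ℚ) : ℂ)
      + (3 * a ^ 2 * b - 3 * b ^ 3 : ℚ) * r = 0 := by
    push_cast
    linear_combination h3 - ((3 : ℂ) * a * b ^ 2 + (b : ℂ) ^ 3 * r) * hr
  obtain ⟨h1', h2'⟩ := lin_indep hr key
  have hb : b * (a ^ 2 - b ^ 2) = 0 := by linarith
  rcases mul_eq_zero.mp hb with hb0 | hab
  · exact ⟨a, by rw [hb0] at h1'; linarith⟩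
  · refine ⟨-2 * a, ?_⟩
    have hba : b ^ 2 = a ^ 2 := by linarith
    have : d = a ^ 3 - 9 * a * b ^ 2 := by linarith
    rw [this, hba]
    ring

lemma nt_main {m C : ℤ} (hsf : ∀ p : ℤ, Prime p → ¬ p ^ 6 ∣ m)
    (h64 : ¬ ((64 : ℤ) ∣ C)) (hCle : C.natAbs < 729) (hC0 : C ≠ 0)
    {w : ℚ} (h : (m : ℚ) = C * w ^ 6) : w ^ 6 = 1 := by
  set n : ℤ := w.num with hn
  set e : ℤ := (w.den : ℤ) with he
  have he0 : e ≠ 0 := by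
    rw [he]
    exact_mod_cast w.den_nz
  have hwne : w = (n : ℚ) / (e : ℚ) := by
    rw [hn, he]; exact_mod_cast (Rat.num_div_den w).symm
  have key : m * e ^ 6 = C * n ^ 6 := by
    have : (m : ℚ) * (e : ℚ) ^ 6 = C * n ^ 6 := by
      rw [h, hwne]
      have : (e : ℚ) ≠ 0 := by exact_mod_cast he0
      field_simp
    exact_mod_cast this
  have hcop : IsCoprime n e := by
    rw [Int.isCoprime_iff_gcd_eq_one]
    exact w.reduced
  have hcop6 : IsCoprime (e ^ 6) (n ^ 6) := (hcop.symm.pow : _)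
  have hdvd : e ^ 6 ∣ C := by
    apply hcop6.dvd_of_dvd_mul_right
    exact ⟨m, by linarith [key]⟩
  have he1 : e = 1 := by
    have hepos : 0 < e := by rw [he]; exact_mod_cast w.pos
    by_contra hne
    have he2 : 2 ≤ e := by omega
    rcases eq_or_lt_of_le he2 with h2 | h3
    · exact h64 (by rw [show (64:ℤ) = 2^6 by norm_num, h2]; exact hdvd)
    · have h36 : (729 : ℤ) ≤ e ^ 6 := by
        calc (729 : ℤ) = 3 ^ 6 := by norm_num
        _ ≤ e ^ 6 := by
          apply pow_le_pow_left₀ (by norm_num) (by omega)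
      have habs : e ^ 6 ≤ |C| := Int.le_of_dvd (abs_pos.mpr hC0) ((dvd_abs _ _).mpr hdvd)
      have h729 : (729:ℤ) ≤ |C| := h36.trans habs
      rw [Int.abs_eq_natAbs] at h729
      omega
  have hn1 : n.natAbs = 1 := by
    by_contra hne
    obtain ⟨p, hp, hpd⟩ := Nat.exists_prime_and_dvd hne
    have hpz : Prime (p : ℤ) := Int.prime_iff_natAbs_prime.mpr (by simpa using hp)
    apply hsf _ hpz
    have : (p : ℤ) ∣ n := (Int.natCast_dvd_natCast.mpr hpd).trans (Int.natAbs_dvd.mpr dvd_rfl)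
    calc (p:ℤ)^6 ∣ n ^ 6 := pow_dvd_pow_of_dvd this 6
    _ ∣ m := by
        rw [show m = C * n ^ 6 by simpa [he1] using key]
        exact dvd_mul_left _ _
  have : n = 1 ∨ n = -1 := Int.natAbs_eq_iff.mp hn1 |>.imp id id
  rw [hwne, he1]
  rcases this with h1 | h1 <;> rw [h1] <;> norm_num

lemma cube_and_sq {d : ℚ} (hd0 : d ≠ 0) {m : ℤ} (hm : (m : ℚ) = 16 * d)
    (hsf : ∀ p : ℤ, Prime p → ¬ p ^ 6 ∣ m) {t u : ℚ} (ht : d = t ^ 3) (hu : d = u ^ 2) :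
    d = 1 := by
  have hu0 : u ≠ 0 := by rintro rfl; rw [hu] at hd0; simp at hd0
  have hw : d = (t ^ 2 / u) ^ 6 := by
    rw [div_pow, eq_div_iff (by positivity)]
    linear_combination (-d*(u^4 + u^2*d + d^2)) * hu + (d^3 + d^2*t^3 + d*t^6 + t^9) * ht
  have h16 : (m : ℚ) = ((16 : ℤ) : ℚ) * (t ^ 2 / u) ^ 6 := by
    rw [hm, ← hw]; norm_num
  have := nt_main hsf (by decide) (by decide) (by decide) h16
  rw [hw, this]

lemma cube_and_neg3sq {d : ℚ} (hd0 : d ≠ 0) {m : ℤ} (hm : (m : ℚ) = 16 * d)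
    (hsf : ∀ p : ℤ, Prime p → ¬ p ^ 6 ∣ m) {t u : ℚ} (ht : d = t ^ 3)
    (hu : d = -3 * u ^ 2) : d = -27 := by
  have hu0 : u ≠ 0 := by rintro rfl; rw [hu] at hd0; simp at hd0
  have hw : d = -27 * (t ^ 2 / (3 * u)) ^ 6 := by
    rw [div_pow, ← mul_div_assoc, eq_div_iff (by positivity)]
    linear_combination (27*d*(9*u^4 - 3*u^2*d + d^2)) * hu
      - 27*(d^3 + d^2*t^3 + d*t^6 + t^9) * ht
  have h432 : (m : ℚ) = ((-432 : ℤ) : ℚ) * (t ^ 2 / (3 * u)) ^ 6 := by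
    rw [hm]
    push_cast
    linear_combination 16 * hw
  have := nt_main hsf (by decide) (by decide) (by decide) h432
  rw [hw, this]
  norm_num

lemma ratc_mem (K : IntermediateField ℚ ℂ) (q : ℚ) : (q : ℂ) ∈ K := by
  have := K.algebraMap_mem q
  simpa using this

lemma sqrt_mem {K : IntermediateField ℚ ℂ} {z w : ℂ} (hw : w ∈ K) (h : z ^ 2 = w ^ 2) :
    z ∈ K := by
  have hf : (z - w) * (z + w) = 0 := by linear_combination h
  rcases mul_eq_zero.mp hf with h0 | h0
  · have : z = w := by linear_combination h0
    rw [this]; exact hw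
  · have : z = -w := by linear_combination h0
    rw [this]; exact K.neg_mem hw

lemma cbrt_mem {K : IntermediateField ℚ ℂ} {r z w : ℂ} (hr : r ^ 2 = -3) (hrK : r ∈ K)
    (hw : w ∈ K) (h : z ^ 3 = w ^ 3) : z ∈ K := by
  have hf : (z - w) * ((2 * z + w - r * w) * (2 * z + w + r * w)) = 0 := by
    linear_combination 4 * h - (z - w) * w ^ 2 * hr
  have h2 : (2 : ℂ) ∈ K := by exact_mod_cast ratc_mem K 2
  rcases mul_eq_zero.mp hf with h0 | h0
  · have : z = w := by linear_combination h0
    rw [this]; exact hw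
  · rcases mul_eq_zero.mp h0 with h1 | h1
    · have : z = (r * w - w) / 2 := by
        field_simp
        linear_combination h1
      rw [this]
      exact K.div_mem (K.sub_mem (K.mul_mem hrK hw) hw) h2
    · have : z = (-(r * w) - w) / 2 := by
        field_simp
        linear_combination h1
      rw [this]
      exact K.div_mem (K.sub_mem (K.neg_mem (K.mul_mem hrK hw)) hw) h2

lemma adjoin_eq1 {s r c : ℂ} (hs : s ∈ IntermediateField.adjoin ℚ ({r} : Set ℂ))
    (hc : c ∈ IntermediateField.adjoin ℚ ({r} : Set ℂ)) :
    IntermediateField.adjoin ℚ ({s, r, c} : Set ℂ)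
      = IntermediateField.adjoin ℚ ({r} : Set ℂ) := by
  apply le_antisymm
  · rw [adjoin_le_iff]
    rintro x (rfl | rfl | rfl)
    · exact hs
    · exact subset_adjoin ℚ _ rfl
    · exact hc
  · rw [adjoin_le_iff]
    rintro x rfl
    exact subset_adjoin ℚ _ (by simp)

lemma adjoin_eq2 {s r c : ℂ} (hc : c ∈ IntermediateField.adjoin ℚ ({r} : Set ℂ)) :
    IntermediateField.adjoin ℚ ({s, r, c} : Set ℂ)
      = IntermediateField.adjoin ℚ ({r} ∪ {s} : Set ℂ) := by
  apply le_antisymm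
  · rw [adjoin_le_iff]
    rintro x (rfl | rfl | rfl)
    · exact subset_adjoin ℚ _ (by simp)
    · exact subset_adjoin ℚ _ (by simp)
    · exact IntermediateField.adjoin.mono ℚ _ _ (by simp) hc
  · rw [adjoin_le_iff]
    rintro x (rfl | rfl)
    · exact subset_adjoin ℚ _ (by simp)
    · exact subset_adjoin ℚ _ (by simp)

lemma adjoin_eq3 {s r c : ℂ} (hs : s ∈ IntermediateField.adjoin ℚ ({r} : Set ℂ)) :
    IntermediateField.adjoin ℚ ({s, r, c} : Set ℂ)
      = IntermediateField.adjoin ℚ ({r} ∪ {c} : Set ℂ) := by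
  apply le_antisymm
  · rw [adjoin_le_iff]
    rintro x (rfl | rfl | rfl)
    · exact IntermediateField.adjoin.mono ℚ _ _ (by simp) hs
    · exact subset_adjoin ℚ _ (by simp)
    · exact subset_adjoin ℚ _ (by simp)
  · rw [adjoin_le_iff]
    rintro x (rfl | rfl)
    · exact subset_adjoin ℚ _ (by simp)
    · exact subset_adjoin ℚ _ (by simp)

lemma adjoin_eq4 {s r c : ℂ} :
    IntermediateField.adjoin ℚ ({s, r, c} : Set ℂ)
      = IntermediateField.adjoin ℚ ({r} ∪ ({c} ∪ {s}) : Set ℂ) := by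
  congr 1
  ext x
  simp only [Set.mem_insert_iff, Set.mem_singleton_iff, Set.mem_union]
  tauto

end Helpers

/-- Degree of `F = ℚ(√d, √−3, ∛d)` over `ℚ`, for `d ∈ ℚ^×` with `16d` a sixth-power-free
integer: it is `2` if `d ∈ {1, −27}`; `4` if `d` is a cube (and not in the previous case);
`6` if `d = t²` or `d = −3t²` (and `d` is not a cube nor in the first case); and `12`
otherwise. -/
theorem stmt_17 (d : ℚ) (hd0 : d ≠ 0) (m : ℤ) (hm : (m : ℚ) = 16 * d)
    (hsf : ∀ p : ℤ, Prime p → ¬ p ^ 6 ∣ m)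
    (s r c : ℂ) (hs : s ^ 2 = (d : ℂ)) (hr : r ^ 2 = -3) (hc : c ^ 3 = (d : ℂ)) :
    ((d = 1 ∨ d = -27) →
      Module.finrank ℚ ↥(IntermediateField.adjoin ℚ ({s, r, c} : Set ℂ)) = 2) ∧
    ((∃ t : ℚ, d = t ^ 3) ∧ ¬(d = 1 ∨ d = -27) →
      Module.finrank ℚ ↥(IntermediateField.adjoin ℚ ({s, r, c} : Set ℂ)) = 4) ∧
    ((∃ t : ℚ, d = t ^ 2 ∨ d = -3 * t ^ 2) ∧ ¬(∃ t : ℚ, d = t ^ 3) ∧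
        ¬(d = 1 ∨ d = -27) →
      Module.finrank ℚ ↥(IntermediateField.adjoin ℚ ({s, r, c} : Set ℂ)) = 6) ∧
    (¬(d = 1 ∨ d = -27) ∧ ¬(∃ t : ℚ, d = t ^ 3) ∧
        ¬(∃ t : ℚ, d = t ^ 2 ∨ d = -3 * t ^ 2) →
      Module.finrank ℚ ↥(IntermediateField.adjoin ℚ ({s, r, c} : Set ℂ)) = 12) := by
  have hrK : r ∈ IntermediateField.adjoin ℚ ({r} : Set ℂ) := subset_adjoin ℚ _ rfl
  have hfinK : Module.finrank ℚ ↥(IntermediateField.adjoin ℚ ({r} : Set ℂ)) = 2 := by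
    apply deg_pow Nat.prime_two (a := (-3 : ℚ))
    · rw [hr]; norm_num
    · intro b hb; nlinarith [sq_nonneg b]
  have hdK : (d : ℂ) ∈ IntermediateField.adjoin ℚ ({r} : Set ℂ) := ratc_mem _ d
  set dK : ↥(IntermediateField.adjoin ℚ ({r} : Set ℂ)) := ⟨(d : ℂ), hdK⟩ with hdKdef
  have halg : algebraMap ↥(IntermediateField.adjoin ℚ ({r} : Set ℂ)) ℂ dK = (d : ℂ) := rfl
  have hKsq : ¬(∃ t : ℚ, d = t ^ 2 ∨ d = -3 * t ^ 2) →
      ∀ b : ↥(IntermediateField.adjoin ℚ ({r} : Set ℂ)), b ^ 2 ≠ dK := by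
    intro hn b hb
    apply hn
    apply sq_class hr b.2
    have := congrArg (algebraMap ↥(IntermediateField.adjoin ℚ ({r} : Set ℂ)) ℂ) hb
    rw [map_pow, halg] at this
    exact this
  have hKcube : ¬(∃ t : ℚ, d = t ^ 3) →
      ∀ b : ↥(IntermediateField.adjoin ℚ ({r} : Set ℂ)), b ^ 3 ≠ dK := by
    intro hn b hb
    apply hn
    apply cube_class hr b.2
    have := congrArg (algebraMap ↥(IntermediateField.adjoin ℚ ({r} : Set ℂ)) ℂ) hb
    rw [map_pow, halg] at this
    exact this
  refine ⟨?_, ?_, ?_, ?_⟩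
  · -- case 1
    rintro (rfl | rfl)
    · have hsK : s ∈ IntermediateField.adjoin ℚ ({r} : Set ℂ) := by
        apply sqrt_mem (IntermediateField.adjoin ℚ ({r} : Set ℂ)).one_mem
        rw [hs]; norm_num
      have hcK : c ∈ IntermediateField.adjoin ℚ ({r} : Set ℂ) := by
        apply cbrt_mem hr hrK (IntermediateField.adjoin ℚ ({r} : Set ℂ)).one_mem
        rw [hc]; norm_num
      rw [adjoin_eq1 hsK hcK]
      exact hfinK
    · have hsK : s ∈ IntermediateField.adjoin ℚ ({r} : Set ℂ) := by
        apply sqrt_mem (K := IntermediateField.adjoin ℚ ({r} : Set ℂ)) (w := 3 * r)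
          ((IntermediateField.adjoin ℚ ({r} : Set ℂ)).mul_mem (ratc_mem _ 3) hrK)
        push_cast at hs ⊢
        linear_combination hs - 9 * hr
      have hcK : c ∈ IntermediateField.adjoin ℚ ({r} : Set ℂ) := by
        apply cbrt_mem hr hrK (w := -3)
          (by exact_mod_cast (IntermediateField.adjoin ℚ ({r} : Set ℂ)).neg_mem (ratc_mem _ 3))
        push_cast at hc ⊢
        linear_combination hc
      rw [adjoin_eq1 hsK hcK]
      exact hfinK
  · -- case 2
    rintro ⟨⟨t, ht⟩, hno1⟩
    have ht0 : (t : ℂ) ≠ 0 := by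
      intro h
      apply hd0
      have : t = 0 := by exact_mod_cast h
      rw [ht, this]; ring
    have hcK : c ∈ IntermediateField.adjoin ℚ ({r} : Set ℂ) := by
      apply cbrt_mem hr hrK (ratc_mem _ t)
      rw [hc, ht]; push_cast; ring
    have hnsq : ¬(∃ u : ℚ, d = u ^ 2 ∨ d = -3 * u ^ 2) := by
      rintro ⟨u, hu | hu⟩
      · exact hno1 (Or.inl (cube_and_sq hd0 hm hsf ht hu))
      · exact hno1 (Or.inr (cube_and_neg3sq hd0 hm hsf ht hu))
    rw [adjoin_eq2 hcK, ← IntermediateField.adjoin_adjoin_left, finrank_restrict, hfinK]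
    rw [deg_pow Nat.prime_two (a := dK) (by rw [halg]; exact hs) (hKsq hnsq)]
  · -- case 3
    rintro ⟨⟨t, ht | ht⟩, hnc, hno1⟩
    · have hsK : s ∈ IntermediateField.adjoin ℚ ({r} : Set ℂ) := by
        apply sqrt_mem (ratc_mem _ t)
        rw [hs, ht]; push_cast; ring
      rw [adjoin_eq3 hsK, ← IntermediateField.adjoin_adjoin_left, finrank_restrict, hfinK]
      rw [deg_pow Nat.prime_three (a := dK) (by rw [halg]; exact hc) (hKcube hnc)]
    · have hsK : s ∈ IntermediateField.adjoin ℚ ({r} : Set ℂ) := by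
        apply sqrt_mem (K := IntermediateField.adjoin ℚ ({r} : Set ℂ)) (w := (t : ℂ) * r)
          ((IntermediateField.adjoin ℚ ({r} : Set ℂ)).mul_mem (ratc_mem _ t) hrK)
        rw [hs, ht]
        push_cast
        linear_combination -(t:ℂ)^2 * hr
      rw [adjoin_eq3 hsK, ← IntermediateField.adjoin_adjoin_left, finrank_restrict, hfinK]
      rw [deg_pow Nat.prime_three (a := dK) (by rw [halg]; exact hc) (hKcube hnc)]
  · -- case 4
    rintro ⟨hno1, hnc, hnsq⟩
    have hL3 : Module.finrank ↥(IntermediateField.adjoin ℚ ({r} : Set ℂ))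
        ↥(IntermediateField.adjoin ↥(IntermediateField.adjoin ℚ ({r} : Set ℂ)) ({c} : Set ℂ))
        = 3 :=
      deg_pow Nat.prime_three (a := dK) (by rw [halg]; exact hc) (hKcube hnc)
    -- d is not a square in L
    have hdL : (d : ℂ) ∈
        IntermediateField.adjoin ↥(IntermediateField.adjoin ℚ ({r} : Set ℂ)) ({c} : Set ℂ) := by
      have := (IntermediateField.adjoin ↥(IntermediateField.adjoin ℚ ({r} : Set ℂ))
        ({c} : Set ℂ)).algebraMap_mem dK
      rwa [halg] at this
    set L := IntermediateField.adjoin ↥(IntermediateField.adjoin ℚ ({r} : Set ℂ))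
      ({c} : Set ℂ) with hLdef
    set dL : ↥L := ⟨(d : ℂ), hdL⟩ with hdLdef
    have halgL : algebraMap ↥L ℂ dL = (d : ℂ) := rfl
    have hLsq : ∀ b : ↥L, b ^ 2 ≠ dL := by
      intro b hb
      have hz2 : (b : ℂ) ^ 2 = (d : ℂ) := by
        have := congrArg (algebraMap ↥L ℂ) hb
        rwa [map_pow, halgL] at this
      have hle : IntermediateField.adjoin ↥(IntermediateField.adjoin ℚ ({r} : Set ℂ))
          ({(b : ℂ)} : Set ℂ) ≤ L := by
        rw [adjoin_le_iff]
        rintro x rfl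
        exact b.2
      have h2' : Module.finrank ↥(IntermediateField.adjoin ℚ ({r} : Set ℂ))
          ↥(IntermediateField.adjoin ↥(IntermediateField.adjoin ℚ ({r} : Set ℂ))
            ({(b : ℂ)} : Set ℂ)) = 2 :=
        deg_pow Nat.prime_two (a := dK) (by rw [halg]; exact hz2) (hKsq hnsq)
      have hdvd : Module.finrank ↥(IntermediateField.adjoin ℚ ({r} : Set ℂ))
          ↥(IntermediateField.adjoin ↥(IntermediateField.adjoin ℚ ({r} : Set ℂ))
            ({(b : ℂ)} : Set ℂ)) ∣
          Module.finrank ↥(IntermediateField.adjoin ℚ ({r} : Set ℂ)) ↥L :=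
        ⟨_, (IntermediateField.finrank_bot_mul_relfinrank hle).symm⟩
      rw [h2', hL3] at hdvd
      norm_num at hdvd
    have hM2 : Module.finrank ↥L ↥(IntermediateField.adjoin ↥L ({s} : Set ℂ)) = 2 :=
      deg_pow Nat.prime_two (a := dL) (by rw [halgL]; exact hs) hLsq
    rw [adjoin_eq4, ← IntermediateField.adjoin_adjoin_left, finrank_restrict, hfinK,
      ← IntermediateField.adjoin_adjoin_left, finrank_restrict, hL3, hM2]
end
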